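/- For every nonzero h ∈ ℂ, the operator Δ̃_h − Δ_h preserves both Im d_h and Im d_h*: (Δ̃_h − Δ_h)(Im d_h) ⊆ Im d_h and (Δ̃_h − Δ_h)(Im d_h*) ⊆ Im d_h*. Consequently the 3-space orthogonal decomposition C^∞_k(X,ℂ) = ker Δ̃_h ⊕ Im d_h ⊕ Im d_h* is stable under Δ̃_h. -/
import Mathlib


/-- For every nonzero `h ∈ ℂ`, the operator `Δ̃_h − Δ_h` preserves both
`Im d_h` and `Im d_h*`; consequently the 3-space orthogonal decomposition
`C^∞_k = ker Δ̃_h ⊕ Im d_h ⊕ Im d_h*` is stable under `Δ̃_h`.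
Here `d_h = h∂ + ∂̄`, `Δ_h = d_h d_h* + d_h* d_h`,
`Δ̃_h = A A* + B* B + Δ_h` with `A = ∂p'' + h∂̄p'`, `B = p''∂ + hp'∂̄`; the known
identities `B d_h = 0`, `A* d_h* = 0`, `Im A ⊆ Im d_h`, `Im B* ⊆ Im d_h*`, and the
commutation of `Δ_h` with `d_h`, `d_h*` are hypotheses. -/
theorem tilde_laplacian_stability
    {Ω : Type*} [AddCommGroup Ω] [Module ℂ Ω]
    (del delbar p' p'' dhstar Astar Bstar : Ω →ₗ[ℂ] Ω)
    (h : ℂ) (hh : h ≠ 0) :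
    let dh : Ω →ₗ[ℂ] Ω := h • del + delbar
    let A : Ω →ₗ[ℂ] Ω := del.comp p'' + h • (delbar.comp p')
    let B : Ω →ₗ[ℂ] Ω := p''.comp del + h • (p'.comp delbar)
    let Δh : Ω →ₗ[ℂ] Ω := dh.comp dhstar + dhstar.comp dh
    let Δt : Ω →ₗ[ℂ] Ω := A.comp Astar + Bstar.comp B + Δh
    B.comp dh = 0 →
    Astar.comp dhstar = 0 →
    LinearMap.range A ≤ LinearMap.range dh →
    LinearMap.range Bstar ≤ LinearMap.range dhstar →
    Δh.comp dh = dh.comp Δh →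
    Δh.comp dhstar = dhstar.comp Δh →
    (Submodule.map (Δt - Δh) (LinearMap.range dh) ≤ LinearMap.range dh) ∧
    (Submodule.map (Δt - Δh) (LinearMap.range dhstar) ≤ LinearMap.range dhstar) ∧
    (Submodule.map Δt (LinearMap.range dh) ≤ LinearMap.range dh) ∧
    (Submodule.map Δt (LinearMap.range dhstar) ≤ LinearMap.range dhstar) ∧
    (Submodule.map Δt (LinearMap.ker Δt) ≤ LinearMap.ker Δt) := by
  intro dh A B Δh Δt hBdh hAsds hrA hrB hc1 hc2
  have key1 : ∀ x ∈ LinearMap.range dh, (Δt - Δh) x ∈ LinearMap.range dh := by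
    rintro _ ⟨x, rfl⟩
    have hB : B (dh x) = 0 := by
      have := congrArg (fun f => f x) hBdh; simpa using this
    have : (Δt - Δh) (dh x) = A (Astar (dh x)) := by
      simp [Δt, hB]
    rw [this]
    exact hrA ⟨Astar (dh x), rfl⟩
  have key2 : ∀ x ∈ LinearMap.range dhstar, (Δt - Δh) x ∈ LinearMap.range dhstar := by
    rintro _ ⟨x, rfl⟩
    have hA : Astar (dhstar x) = 0 := by
      have := congrArg (fun f => f x) hAsds; simpa using this
    have : (Δt - Δh) (dhstar x) = Bstar (B (dhstar x)) := by
      simp [Δt, hA]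
    rw [this]
    exact hrB ⟨B (dhstar x), rfl⟩
  refine ⟨?_, ?_, ?_, ?_, ?_⟩
  · rintro _ ⟨y, hy, rfl⟩; exact key1 y hy
  · rintro _ ⟨y, hy, rfl⟩; exact key2 y hy
  · rintro _ ⟨y, hy, rfl⟩
    have h1 := key1 y hy
    have h2 : Δh y ∈ LinearMap.range dh := by
      obtain ⟨x, rfl⟩ := hy
      have : Δh (dh x) = dh (Δh x) := by
        have := congrArg (fun f => f x) hc1; simpa using this
      rw [this]; exact ⟨Δh x, rfl⟩
    have : Δt y = (Δt - Δh) y + Δh y := by simp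
    rw [this]; exact Submodule.add_mem _ h1 h2
  · rintro _ ⟨y, hy, rfl⟩
    have h1 := key2 y hy
    have h2 : Δh y ∈ LinearMap.range dhstar := by
      obtain ⟨x, rfl⟩ := hy
      have : Δh (dhstar x) = dhstar (Δh x) := by
        have := congrArg (fun f => f x) hc2; simpa using this
      rw [this]; exact ⟨Δh x, rfl⟩
    have : Δt y = (Δt - Δh) y + Δh y := by simp
    rw [this]; exact Submodule.add_mem _ h1 h2
  · rintro _ ⟨y, hy, rfl⟩
    simp only [LinearMap.mem_ker] at hy ⊢
    rw [hy]; simp
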